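/- arXiv:2101.02669 — 7 statements merged into one kernel-verified Lean document; each statement's English description precedes it below -/
import Mathlib

section
/- Let Z ⊆ ℝᵈ be convex and compact with 0 ∈ Z, and let g(x,·) : Z → ℝ be concave and continuous for each x. Define g̃(x, (z̃, λ)) = λ·g(x, z̃/λ) for λ > 0 with z̃ ∈ λZ, and g̃(x, (0,0)) = 0. Then g̃(x,·) is continuous on the cone U = {(z̃, λ) : λ ≥ 0, z̃ ∈ λZ}; in particular g̃(x, u) → 0 as u → (0,0) within U. -/
open scoped Pointwise

/-- The perspective `g̃(x,·)` of a concave continuous `g(x,·)` on a convex compact `Z ∋ 0`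
is continuous on the cone `U = {(z̃,λ) : λ ≥ 0, z̃ ∈ λZ}`; in particular it tends to `0`
at the origin within `U`. -/
theorem perspective_continuousOn_cone (n d : ℕ) (Z : Set (Fin d → ℝ))
    (hZconv : Convex ℝ Z) (hZcomp : IsCompact Z) (hZ0 : (0 : Fin d → ℝ) ∈ Z)
    (g : (Fin n → ℝ) → (Fin d → ℝ) → ℝ) (x : Fin n → ℝ)
    (hconc : ConcaveOn ℝ Z (g x)) (hcont : ContinuousOn (g x) Z)
    (gt : (Fin d → ℝ) × ℝ → ℝ)
    (hgt : ∀ p, gt p = if 0 < p.2 then p.2 * g x (p.2⁻¹ • p.1) else 0) :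
    ContinuousOn gt {p : (Fin d → ℝ) × ℝ | 0 ≤ p.2 ∧ p.1 ∈ p.2 • Z} ∧
      Filter.Tendsto gt
        (nhdsWithin ((0 : Fin d → ℝ), (0 : ℝ))
          {p : (Fin d → ℝ) × ℝ | 0 ≤ p.2 ∧ p.1 ∈ p.2 • Z})
        (nhds 0) := by
  set U : Set ((Fin d → ℝ) × ℝ) := {p | 0 ≤ p.2 ∧ p.1 ∈ p.2 • Z} with hUdef
  obtain ⟨M, hM⟩ : ∃ M, ∀ z ∈ Z, ‖g x z‖ ≤ M :=
    hZcomp.exists_bound_of_continuousOn hcont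
  have hM0 : 0 ≤ M := le_trans (norm_nonneg _) (hM 0 hZ0)
  have hmaps : ∀ p ∈ U, p.2⁻¹ • p.1 ∈ Z := by
    rintro ⟨z, l⟩ ⟨hl, hz⟩
    rw [Set.mem_smul_set] at hz
    obtain ⟨w, hw, hwz⟩ := hz
    simp only at hl hwz ⊢
    rcases eq_or_lt_of_le hl with h | h
    · rw [← hwz, ← h]
      simpa using hZ0
    · rw [← hwz, smul_smul, inv_mul_cancel₀ h.ne', one_smul]; exact hw
  have htend : Filter.Tendsto gt (nhdsWithin ((0 : Fin d → ℝ), (0 : ℝ)) U) (nhds 0) := by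
    have hb : ∀ p ∈ U, ‖gt p‖ ≤ M * p.2 := by
      intro p hp
      rw [hgt]
      by_cases h : 0 < p.2
      · rw [if_pos h, norm_mul, Real.norm_of_nonneg h.le, mul_comm]
        exact mul_le_mul_of_nonneg_right (hM _ (hmaps p hp)) h.le
      · rw [if_neg h]
        simpa using mul_nonneg hM0 hp.1
    have h2 : Filter.Tendsto (fun p : (Fin d → ℝ) × ℝ => M * p.2)
        (nhdsWithin ((0 : Fin d → ℝ), (0 : ℝ)) U) (nhds 0) := by
      have : Filter.Tendsto (fun p : (Fin d → ℝ) × ℝ => p.2)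
          (nhdsWithin ((0 : Fin d → ℝ), (0 : ℝ)) U) (nhds 0) :=
        (continuous_snd.tendsto _).mono_left nhdsWithin_le_nhds
      simpa using this.const_mul M
    exact squeeze_zero_norm' (Filter.eventually_of_mem self_mem_nhdsWithin hb) h2
  refine ⟨?_, htend⟩
  intro p hp
  rcases eq_or_lt_of_le hp.1 with h0 | hpos
  · have hp1 : p.1 = 0 := by
      have h := hp.2
      rw [← h0] at h
      rw [Set.zero_smul_set ⟨0, hZ0⟩] at h
      simpa using h
    have hpe : p = ((0 : Fin d → ℝ), (0 : ℝ)) := Prod.ext hp1 h0.symm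
    have hgt0 : gt p = 0 := by rw [hgt, if_neg (by rw [← h0]; exact lt_irrefl 0)]
    rw [ContinuousWithinAt, hpe]
    have h00 : gt ((0 : Fin d → ℝ), (0 : ℝ)) = 0 := by rw [hgt]; simp
    rw [h00]
    exact htend
  · have hcin : ContinuousWithinAt (fun q : (Fin d → ℝ) × ℝ => q.2⁻¹ • q.1) U p :=
      ((continuous_snd.continuousAt.inv₀ hpos.ne').smul
        continuous_fst.continuousAt).continuousWithinAt
    have hgcomp : ContinuousWithinAt ((g x) ∘ fun q : (Fin d → ℝ) × ℝ => q.2⁻¹ • q.1) U p :=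
      ContinuousWithinAt.comp (hcont _ (hmaps p hp)) hcin hmaps
    have hg : ContinuousWithinAt (fun q : (Fin d → ℝ) × ℝ => q.2 * g x (q.2⁻¹ • q.1)) U p :=
      continuous_snd.continuousWithinAt.mul hgcomp
    apply hg.congr_of_eventuallyEq
    · have hopen : {q : (Fin d → ℝ) × ℝ | 0 < q.2} ∈ nhds p :=
        (isOpen_lt continuous_const continuous_snd).mem_nhds hpos
      exact Filter.eventually_of_mem (nhdsWithin_le_nhds hopen)
        (fun q hq => by
          have hq' : 0 < q.2 := hq
          rw [hgt, if_pos hq'])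
    · rw [hgt, if_pos hpos]
end

section
/- Under the setting of the saddle-point Lagrangian with the Slater condition (there exists x̂ ∈ int(X) with Ax̂ = b and an ε > 0 such that x̂ + y ∈ X and f_i(x̂ + y) < 0 for all ‖y‖ ≤ ε), and with A of full row rank, the optimal dual variable w* for the equality constraints satisfies ‖w*‖ ≤ (1/σ_min(A)) · ((cᵀx̂ − v̲)/ε + ‖c‖), where v̲ is any strict lower bound on the optimal value. -/
open scoped RealInnerProductSpace

/-- Bound on the optimal dual variable of the equality constraints:
`‖w*‖ ≤ (1/σ_min(A))·((cᵀx̂ − v̲)/ε + ‖c‖)`. -/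
theorem dual_equality_multiplier_bound (n m r : ℕ)
    (X : Set (EuclideanSpace ℝ (Fin n))) (hXc : IsClosed X) (hXconv : Convex ℝ X)
    (c : EuclideanSpace ℝ (Fin n)) (f : Fin m → EuclideanSpace ℝ (Fin n) → ℝ)
    (A : EuclideanSpace ℝ (Fin n) →L[ℝ] EuclideanSpace ℝ (Fin r))
    (b : EuclideanSpace ℝ (Fin r))
    (L : EuclideanSpace ℝ (Fin n) → (Fin m → ℝ) → EuclideanSpace ℝ (Fin r) → ℝ)
    (hL : ∀ x lam w, L x lam w = ⟪c, x⟫ + ∑ i, lam i * f i x + ⟪w, A x - b⟫)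
    -- σ_min(A) > 0, the smallest singular value of A (full row rank)
    (σmin : ℝ) (hσpos : 0 < σmin)
    (hσ : ∀ w : EuclideanSpace ℝ (Fin r), σmin * ‖w‖ ≤ ‖ContinuousLinearMap.adjoint A w‖)
    (xstar xhat : EuclideanSpace ℝ (Fin n))
    -- x* is an optimal solution
    (hxsX : xstar ∈ X) (hxsf : ∀ i, f i xstar ≤ 0) (hxsA : A xstar = b)
    (hopt : ∀ x ∈ X, (∀ i, f i x ≤ 0) → A x = b → ⟪c, xstar⟫ ≤ ⟪c, x⟫)
    -- Slater condition with constant ε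
    (eps : ℝ) (heps : 0 < eps)
    (hhint : xhat ∈ interior X) (hhA : A xhat = b)
    (hslater : ∀ y : EuclideanSpace ℝ (Fin n), ‖y‖ ≤ eps →
      xhat + y ∈ X ∧ ∀ i, f i (xhat + y) < 0)
    -- v̲ is a strict lower bound on the optimal value
    (v : ℝ) (hv : ∀ x ∈ X, (∀ i, f i x ≤ 0) → A x = b → v < ⟪c, x⟫)
    -- (x*, (λ*, w*)) is a saddle point of L over X × ℝ₊ᵐ × ℝʳ
    (lamstar : Fin m → ℝ) (wstar : EuclideanSpace ℝ (Fin r))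
    (hlampos : ∀ i, 0 ≤ lamstar i)
    (hsaddle1 : ∀ lam : Fin m → ℝ, (∀ i, 0 ≤ lam i) →
      ∀ w, L xstar lam w ≤ L xstar lamstar wstar)
    (hsaddle2 : ∀ x ∈ X, L xstar lamstar wstar ≤ L x lamstar wstar) :
    ‖wstar‖ ≤ (1 / σmin) * ((⟪c, xhat⟫ - v) / eps + ‖c‖) := by

  set u := ContinuousLinearMap.adjoint A wstar with hu
  have hLs : ⟪c, xstar⟫ ≤ L xstar lamstar wstar := by
    have h := hsaddle1 0 (fun i => le_refl 0) wstar
    simpa [hL, hxsA, sub_self, inner_zero_right] using h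
  have hxhat0 := hslater 0 (by simpa using heps.le)
  have hxhatX : xhat ∈ X := by simpa using hxhat0.1
  have hvx : v < ⟪c, xhat⟫ := by
    refine hv xhat hxhatX (fun i => le_of_lt ?_) hhA
    simpa using hxhat0.2 i
  have hvs : v < ⟪c, xstar⟫ := hv xstar hxsX hxsf hxsA
  have key : ∀ y : EuclideanSpace ℝ (Fin n), ‖y‖ ≤ eps →
      ⟪c, xstar⟫ ≤ ⟪c, xhat⟫ + ⟪c, y⟫ + ⟪wstar, A y⟫ := by
    intro y hy
    obtain ⟨hyX, hyf⟩ := hslater y hy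
    have h2 := hsaddle2 _ hyX
    have hS : ∑ i, lamstar i * f i (xhat + y) ≤ 0 :=
      Finset.sum_nonpos fun i _ =>
        mul_nonpos_of_nonneg_of_nonpos (hlampos i) (le_of_lt (hyf i))
    have hA2 : A (xhat + y) - b = A y := by rw [map_add, hhA]; abel
    have hE : L (xhat + y) lamstar wstar
        = ⟪c, xhat + y⟫ + (∑ i, lamstar i * f i (xhat + y)) + ⟪wstar, A y⟫ := by
      rw [hL, hA2]
    have hci : ⟪c, xhat + y⟫ = ⟪c, xhat⟫ + ⟪c, y⟫ := inner_add_right _ _ _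
    have := le_trans hLs h2
    rw [hE, hci] at this
    linarith
  have hbound : ‖u‖ ≤ (⟪c, xhat⟫ - v) / eps + ‖c‖ := by
    by_cases h0 : u = 0
    · rw [h0, norm_zero]
      have h1 : 0 ≤ (⟪c, xhat⟫ - v) / eps := div_nonneg (by linarith) heps.le
      have := norm_nonneg c
      linarith
    · have hnu : 0 < ‖u‖ := norm_pos_iff.mpr h0
      set y : EuclideanSpace ℝ (Fin n) := (-(eps / ‖u‖)) • u with hy
      have hny : ‖y‖ = eps := by
        rw [hy, norm_smul, Real.norm_eq_abs, abs_neg, abs_of_pos (div_pos heps hnu),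
          div_mul_cancel₀ _ hnu.ne']
      have hk := key y (le_of_eq hny)
      have hadj : ⟪wstar, A y⟫ = ⟪u, y⟫ := (ContinuousLinearMap.adjoint_inner_left A y wstar).symm
      have huy : ⟪u, y⟫ = -(eps * ‖u‖) := by
        rw [hy, real_inner_smul_right, real_inner_self_eq_norm_sq]
        field_simp
      have hcy : ⟪c, y⟫ ≤ ‖c‖ * eps := by
        have := real_inner_le_norm c y
        rw [hny] at this
        exact this
      rw [hadj, huy] at hk
      rw [div_add' _ _ _ heps.ne', le_div_iff₀ heps]
      linarith
  have hfinal := le_trans (hσ wstar) hbound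
  rw [one_div, inv_mul_eq_div, le_div_iff₀ hσpos]
  linarith
end

section
/- Let X ⊆ ℝⁿ be closed convex and σ_X(π) = sup_{x∈X} πᵀx its support function. For a bilinear saddle function L̄(x,(u,w)) = cᵀx + xᵀQ̃u + q̃ᵀu + wᵀ(Ax−b) with saddle point (x*,(u*,w*)) over X × U × ℝʳ, set π* = −c − Q̃u* − Aᵀw*. Then (x*,(u*,w*,π*)) is a saddle point of L̃(x,(u,w,π)) = xᵀ(c + Aᵀw + Q̃u + π) + q̃ᵀu − bᵀw − σ_X(π) over ℝⁿ × (U × ℝʳ × ℝⁿ). Conversely, any saddle point of L̃ yields a saddle point of L̄ with the same x*, u*, w*. -/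
open scoped RealInnerProductSpace

/-- Equivalence of saddle points of the bilinear lifted Lagrangian `L̄` over `X × U × ℝʳ`
and of `L̃` (obtained by dualizing the indicator of `X` via its support function)
over `ℝⁿ × (U × ℝʳ × ℝⁿ)`. -/
theorem saddle_Lbar_iff_saddle_Ltil (n K r : ℕ)
    (X : Set (EuclideanSpace ℝ (Fin n))) (hXc : IsClosed X) (hXconv : Convex ℝ X)
    (hXne : X.Nonempty)
    (U : Set (EuclideanSpace ℝ (Fin K))) (hUconv : Convex ℝ U)
    (Q : EuclideanSpace ℝ (Fin K) →L[ℝ] EuclideanSpace ℝ (Fin n))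
    (q : EuclideanSpace ℝ (Fin K))
    (A : EuclideanSpace ℝ (Fin n) →L[ℝ] EuclideanSpace ℝ (Fin r))
    (b : EuclideanSpace ℝ (Fin r)) (c : EuclideanSpace ℝ (Fin n))
    -- support function of X, valued in EReal to allow +∞
    (σX : EuclideanSpace ℝ (Fin n) → EReal)
    (hσX : ∀ π, σX π = ⨆ x ∈ X, ((⟪π, x⟫ : ℝ) : EReal))
    (Lbar : EuclideanSpace ℝ (Fin n) → EuclideanSpace ℝ (Fin K) →
      EuclideanSpace ℝ (Fin r) → ℝ)
    (hLbar : ∀ x u w, Lbar x u w = ⟪c, x⟫ + ⟪x, Q u⟫ + ⟪q, u⟫ + ⟪w, A x - b⟫)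
    (Ltil : EuclideanSpace ℝ (Fin n) → EuclideanSpace ℝ (Fin K) →
      EuclideanSpace ℝ (Fin r) → EuclideanSpace ℝ (Fin n) → EReal)
    (hLtil : ∀ x u w π, Ltil x u w π =
      (((⟪x, c + ContinuousLinearMap.adjoint A w + Q u + π⟫ + ⟪q, u⟫ - ⟪b, w⟫ : ℝ)) : EReal)
        - σX π)
    (xstar : EuclideanSpace ℝ (Fin n)) (ustar : EuclideanSpace ℝ (Fin K))
    (wstar : EuclideanSpace ℝ (Fin r))
    (hxstar : xstar ∈ X) (hustar : ustar ∈ U) :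
    -- forward direction: a saddle point of L̄ yields one of L̃ with π* as below
    ((((∀ u ∈ U, ∀ w, Lbar xstar u w ≤ Lbar xstar ustar wstar) ∧
        (∀ x ∈ X, Lbar xstar ustar wstar ≤ Lbar x ustar wstar)) →
      ((∀ u ∈ U, ∀ w π, Ltil xstar u w π ≤
          Ltil xstar ustar wstar (-c - Q ustar - ContinuousLinearMap.adjoint A wstar)) ∧
        (∀ x, Ltil xstar ustar wstar (-c - Q ustar - ContinuousLinearMap.adjoint A wstar) ≤
          Ltil x ustar wstar (-c - Q ustar - ContinuousLinearMap.adjoint A wstar)))) ∧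
    -- converse: a saddle point of L̃ yields a saddle point of L̄ with the same x*, u*, w*
    (∀ pistar : EuclideanSpace ℝ (Fin n),
      ((∀ u ∈ U, ∀ w π, Ltil xstar u w π ≤ Ltil xstar ustar wstar pistar) ∧
        (∀ x, Ltil xstar ustar wstar pistar ≤ Ltil x ustar wstar pistar)) →
      ((∀ u ∈ U, ∀ w, Lbar xstar u w ≤ Lbar xstar ustar wstar) ∧
        (∀ x ∈ X, Lbar xstar ustar wstar ≤ Lbar x ustar wstar)))) := by
  -- membership bound for the support function
  have hmem : ∀ (π : EuclideanSpace ℝ (Fin n)) (x), x ∈ X →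
      ((⟪π, x⟫ : ℝ) : EReal) ≤ σX π := by
    intro π x hx
    rw [hσX]
    exact le_iSup₂ (f := fun x (_ : x ∈ X) => ((⟪π, x⟫ : ℝ) : EReal)) x hx
  -- value at 0
  have hσ0 : σX 0 = 0 := by
    obtain ⟨x₀, hx₀⟩ := hXne
    rw [hσX]
    apply le_antisymm
    · exact iSup₂_le fun x hx => by simp
    · have h := le_iSup₂ (f := fun x (_ : x ∈ X) =>
        ((⟪(0 : EuclideanSpace ℝ (Fin n)), x⟫ : ℝ) : EReal)) x₀ hx₀
      simpa using h
  -- attained supremum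
  have hσ_eq : ∀ (π : EuclideanSpace ℝ (Fin n)) (x₀), x₀ ∈ X →
      (∀ x ∈ X, (⟪π, x⟫ : ℝ) ≤ ⟪π, x₀⟫) → σX π = ((⟪π, x₀⟫ : ℝ) : EReal) := by
    intro π x₀ hx₀ h
    refine le_antisymm ?_ (hmem π x₀ hx₀)
    rw [hσX]
    exact iSup₂_le fun x hx => EReal.coe_le_coe_iff.mpr (h x hx)
  -- key algebraic identity
  have hkey : ∀ x u w π,
      (⟪x, c + ContinuousLinearMap.adjoint A w + Q u + π⟫ + ⟪q, u⟫ - ⟪b, w⟫ : ℝ)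
        = Lbar x u w + ⟪x, π⟫ := by
    intro x u w π
    rw [hLbar]
    simp only [inner_add_right, inner_sub_right, ContinuousLinearMap.adjoint_inner_right]
    rw [real_inner_comm c x, real_inner_comm w (A x), real_inner_comm w b]
    ring
  have hLtil' : ∀ x u w π,
      Ltil x u w π = ((Lbar x u w + ⟪x, π⟫ : ℝ) : EReal) - σX π := by
    intro x u w π
    rw [hLtil, hkey]
  -- the bilinear Lagrangian is constant along the dual direction
  have hconst : ∀ x, Lbar x ustar wstar
      + ⟪-c - Q ustar - ContinuousLinearMap.adjoint A wstar, x⟫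
      = ⟪q, ustar⟫ - ⟪b, wstar⟫ := by
    intro x
    rw [hLbar]
    simp only [inner_sub_left, inner_neg_left, inner_sub_right,
      ContinuousLinearMap.adjoint_inner_left]
    rw [real_inner_comm wstar b, real_inner_comm (Q ustar) x]
    ring
  constructor
  · -- forward direction
    rintro ⟨h1, h2⟩
    set πs := -c - Q ustar - ContinuousLinearMap.adjoint A wstar with hπsdef
    have hx_opt : ∀ x ∈ X, (⟪πs, x⟫ : ℝ) ≤ ⟪πs, xstar⟫ := by
      intro x hx
      have h2' := h2 x hx
      have e1 := hconst x
      have e2 := hconst xstar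
      linarith
    have hσπ : σX πs = ((⟪πs, xstar⟫ : ℝ) : EReal) := hσ_eq πs xstar hxstar hx_opt
    have hRHS : Ltil xstar ustar wstar πs = ((Lbar xstar ustar wstar : ℝ) : EReal) := by
      rw [hLtil' xstar ustar wstar πs, hσπ, ← EReal.coe_sub]
      norm_cast
      rw [real_inner_comm xstar πs]
      ring
    constructor
    · intro u hu w π
      rw [hRHS, hLtil' xstar u w π]
      calc ((Lbar xstar u w + ⟪xstar, π⟫ : ℝ) : EReal) - σX π
          ≤ ((Lbar xstar ustar wstar + ⟪xstar, π⟫ : ℝ) : EReal) - ((⟪π, xstar⟫ : ℝ) : EReal) :=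
            EReal.sub_le_sub
              (EReal.coe_le_coe_iff.mpr (by have := h1 u hu w; linarith))
              (hmem π xstar hxstar)
        _ = ((Lbar xstar ustar wstar : ℝ) : EReal) := by
            rw [← EReal.coe_sub]
            norm_cast
            rw [real_inner_comm xstar π]
            ring
    · intro x
      have hzero : c + ContinuousLinearMap.adjoint A wstar + Q ustar + πs = 0 := by
        rw [hπsdef]; abel
      rw [hLtil xstar ustar wstar πs, hLtil x ustar wstar πs, hzero]
      simp
  · -- converse direction
    rintro πs ⟨h1, h2⟩
    have hne_bot : σX πs ≠ ⊥ := by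
      intro h
      have hb := hmem πs xstar hxstar
      rw [h, le_bot_iff] at hb
      exact EReal.coe_ne_bot _ hb
    have hne_top : σX πs ≠ ⊤ := by
      intro h
      have h0 := h1 ustar hustar wstar 0
      rw [hLtil xstar ustar wstar 0, hLtil xstar ustar wstar πs, hσ0, h,
        EReal.sub_top] at h0
      have h0' : (((⟪xstar, c + ContinuousLinearMap.adjoint A wstar + Q ustar + 0⟫
          + ⟪q, ustar⟫ - ⟪b, wstar⟫ : ℝ)) : EReal) ≤ ⊥ := le_trans (by
        rw [sub_zero]) h0
      rw [le_bot_iff] at h0'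
      exact EReal.coe_ne_bot _ h0'
    set s := (σX πs).toReal with hsdef
    have hcs : ((s : ℝ) : EReal) = σX πs := EReal.coe_toReal hne_top hne_bot
    -- the multiplier attains the support function at xstar
    have hxs_le : (⟪πs, xstar⟫ : ℝ) ≤ s := by
      have h := hmem πs xstar hxstar
      rw [← hcs] at h
      exact_mod_cast h
    have hs_le : s ≤ ⟪xstar, πs⟫ := by
      have h0 := h1 ustar hustar wstar 0
      rw [hLtil' xstar ustar wstar 0, hLtil' xstar ustar wstar πs, hσ0, ← hcs,
        ← EReal.coe_sub, sub_zero] at h0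
      have h0' : (Lbar xstar ustar wstar + ⟪xstar, (0 : EuclideanSpace ℝ (Fin n))⟫ : ℝ)
          ≤ Lbar xstar ustar wstar + ⟪xstar, πs⟫ - s := by exact_mod_cast h0
      rw [inner_zero_right] at h0'
      linarith
    -- the first-order condition in x forces the linear term to vanish
    have hv : c + ContinuousLinearMap.adjoint A wstar + Q ustar + πs = 0 := by
      set v := c + ContinuousLinearMap.adjoint A wstar + Q ustar + πs with hvdef
      have hx := h2 (xstar - v)
      rw [hLtil xstar ustar wstar πs, hLtil (xstar - v) ustar wstar πs, ← hvdef, ← hcs,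
        ← EReal.coe_sub, ← EReal.coe_sub, EReal.coe_le_coe_iff] at hx
      rw [inner_sub_left] at hx
      have hvv : (⟪v, v⟫ : ℝ) ≤ 0 := by linarith
      exact inner_self_eq_zero.mp (le_antisymm hvv real_inner_self_nonneg)
    have hπs_eq : πs = -c - Q ustar - ContinuousLinearMap.adjoint A wstar := by
      have h := hv
      rw [show c + ContinuousLinearMap.adjoint A wstar + Q ustar + πs
        = πs - (-c - Q ustar - ContinuousLinearMap.adjoint A wstar) from by abel] at h
      exact sub_eq_zero.mp h
    constructor
    · intro u hu w
      have h := h1 u hu w πs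
      rw [hLtil' xstar u w πs, hLtil' xstar ustar wstar πs, ← hcs,
        ← EReal.coe_sub, ← EReal.coe_sub, EReal.coe_le_coe_iff] at h
      linarith
    · intro x hx
      have e1 := hconst x
      have e2 := hconst xstar
      rw [← hπs_eq] at e1 e2
      have hpx : (⟪πs, x⟫ : ℝ) ≤ s := by
        have h := hmem πs x hx
        rw [← hcs] at h
        exact_mod_cast h
      have hpxs : s ≤ ⟪πs, xstar⟫ := by
        rw [real_inner_comm]
        exact hs_le
      linarith
end

section
/- Let Z ⊆ ℝᵈ be convex compact with 0 ∈ Z, and U = {(z̃, λ) : λ ≥ 0, z̃ ∈ λZ} its conic extension. Given (z̃₀, λ₀) ∉ U with σ_Z(z̃₀) > −λ₀, the Euclidean projection of (z̃₀, λ₀) onto U equals (μ*·P_Z(z̃₀/μ*), μ*) where μ* > 0 is the unique solution of μ‖P_Z(z̃₀/μ)‖² − z̃₀ᵀP_Z(z̃₀/μ) + μ − λ₀ = 0. If instead σ_Z(z̃₀) ≤ −λ₀, the projection is the origin. -/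
open scoped RealInnerProductSpace Pointwise

lemma proj_variational_ineq {d : ℕ} {Z : Set (EuclideanSpace ℝ (Fin d))} (hZconv : Convex ℝ Z)
    (PZ : EuclideanSpace ℝ (Fin d) → EuclideanSpace ℝ (Fin d))
    (hPZ : ∀ y, PZ y ∈ Z ∧ ∀ x ∈ Z, ‖y - PZ y‖ ≤ ‖y - x‖) :
    ∀ y, ∀ x ∈ Z, ⟪y - PZ y, x - PZ y⟫ ≤ 0 := by
  intro y
  haveI : Nonempty Z := ⟨⟨PZ y, (hPZ y).1⟩⟩
  apply (norm_eq_iInf_iff_real_inner_le_zero hZconv (hPZ y).1).1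
  apply le_antisymm
  · exact le_ciInf fun w => (hPZ y).2 w w.2
  · have hbdd : BddBelow (Set.range fun w : Z => ‖y - (w : EuclideanSpace ℝ (Fin d))‖) :=
      ⟨0, by rintro r ⟨w, rfl⟩; exact norm_nonneg _⟩
    exact ciInf_le hbdd ⟨PZ y, (hPZ y).1⟩

/-- Projection onto the conic extension `U = {(z̃,λ) : λ ≥ 0, z̃ ∈ λZ}` of a convex compact
set `Z ∋ 0`: if `(z̃₀,λ₀) ∉ U` and `σ_Z(z̃₀) > −λ₀` the projection is
`(μ*·P_Z(z̃₀/μ*), μ*)` with `μ* > 0` the unique root of the stated equation; if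
`σ_Z(z̃₀) ≤ -λ₀` the projection is the origin. -/
theorem projection_onto_cone (d : ℕ) (Z : Set (EuclideanSpace ℝ (Fin d)))
    (hZconv : Convex ℝ Z) (hZcomp : IsCompact Z) (hZ0 : (0 : EuclideanSpace ℝ (Fin d)) ∈ Z)
    (PZ : EuclideanSpace ℝ (Fin d) → EuclideanSpace ℝ (Fin d))
    (hPZ : ∀ y, PZ y ∈ Z ∧ ∀ x ∈ Z, ‖y - PZ y‖ ≤ ‖y - x‖)
    (U : Set (EuclideanSpace ℝ (Fin d) × ℝ))
    (hU : U = {p : EuclideanSpace ℝ (Fin d) × ℝ | 0 ≤ p.2 ∧ p.1 ∈ p.2 • Z})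
    (z0 : EuclideanSpace ℝ (Fin d)) (l0 : ℝ)
    (σZ : ℝ) (hσZ : IsLUB ((fun z => (⟪z0, z⟫ : ℝ)) '' Z) σZ) :
    ((z0, l0) ∉ U → -l0 < σZ → ∀ μ : ℝ, 0 < μ →
      μ * ‖PZ (μ⁻¹ • z0)‖ ^ 2 - ⟪z0, PZ (μ⁻¹ • z0)⟫ + μ - l0 = 0 →
      (((μ • PZ (μ⁻¹ • z0), μ) ∈ U ∧
        ∀ p ∈ U, ‖z0 - μ • PZ (μ⁻¹ • z0)‖ ^ 2 + (l0 - μ) ^ 2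
          ≤ ‖z0 - p.1‖ ^ 2 + (l0 - p.2) ^ 2) ∧
      ∀ μ' : ℝ, 0 < μ' →
        μ' * ‖PZ (μ'⁻¹ • z0)‖ ^ 2 - ⟪z0, PZ (μ'⁻¹ • z0)⟫ + μ' - l0 = 0 → μ' = μ)) ∧
    (σZ ≤ -l0 →
      ((0 : EuclideanSpace ℝ (Fin d)), (0 : ℝ)) ∈ U ∧
        ∀ p ∈ U, ‖z0‖ ^ 2 + l0 ^ 2 ≤ ‖z0 - p.1‖ ^ 2 + (l0 - p.2) ^ 2) := by
  have hVI := proj_variational_ineq hZconv PZ hPZ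
  -- key scalar inequality for any positive root ν :
  -- ∀ t ≥ 0, x ∈ Z :  ⟪z0 - ν•w, t•x - ν•w⟫ + (l0 - ν)*(t - ν) ≤ 0
  have hgen : ∀ ν : ℝ, 0 < ν →
      ν * ‖PZ (ν⁻¹ • z0)‖ ^ 2 - ⟪z0, PZ (ν⁻¹ • z0)⟫ + ν - l0 = 0 →
      ∀ t : ℝ, 0 ≤ t → ∀ x ∈ Z,
      ⟪z0 - ν • PZ (ν⁻¹ • z0), t • x - ν • PZ (ν⁻¹ • z0)⟫ + (l0 - ν) * (t - ν) ≤ 0 := by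
    intro ν hν hroot t ht x hx
    set w := PZ (ν⁻¹ • z0) with hw
    have hwZ := (hPZ (ν⁻¹ • z0)).1
    have hvi := hVI (ν⁻¹ • z0) x hx
    -- ⟪z0 - ν•w, x - w⟫ ≤ 0
    have h1 : ⟪z0 - ν • w, x - w⟫ ≤ 0 := by
      have : ⟪z0 - ν • w, x - w⟫ = ν * ⟪ν⁻¹ • z0 - w, x - w⟫ := by
        rw [← real_inner_smul_left]
        congr 1
        rw [smul_sub, smul_smul, mul_inv_cancel₀ hν.ne', one_smul]
      rw [this]
      exact mul_nonpos_of_nonneg_of_nonpos hν.le hvi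
    -- ⟪z0 - ν•w, w⟫ = ν - l0
    have h2 : ⟪z0 - ν • w, w⟫ = ν - l0 := by
      rw [inner_sub_left, real_inner_smul_left, real_inner_self_eq_norm_sq]
      linarith [hroot]
    have h3 : ⟪z0 - ν • w, x⟫ ≤ ν - l0 := by
      rw [inner_sub_right] at h1; linarith
    rw [inner_sub_right, real_inner_smul_right, real_inner_smul_right, h2]
    have := mul_le_mul_of_nonneg_left h3 ht
    nlinarith
  constructor
  · intro _hnU _hσ μ hμ hroot
    set w := PZ (μ⁻¹ • z0) with hwdef
    have hwZ := (hPZ (μ⁻¹ • z0)).1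
    have hμgen := hgen μ hμ hroot
    constructor
    · constructor
      · rw [hU]
        exact ⟨hμ.le, Set.smul_mem_smul_set hwZ⟩
      · rintro ⟨z, t⟩ hp
        rw [hU] at hp
        obtain ⟨ht, hz⟩ := hp
        rw [Set.mem_smul_set] at hz
        obtain ⟨x, hx, hz⟩ := hz
        dsimp only at ht hz ⊢
        rw [← hz]
        have hkey := hμgen t ht x hx
        rw [inner_sub_left, inner_sub_right, inner_sub_right] at hkey
        have e1 : ‖z0 - μ • w‖ ^ 2 = ‖z0‖ ^ 2 - 2 * ⟪z0, μ • w⟫ + ‖μ • w‖ ^ 2 := by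
          rw [norm_sub_sq_real]
        have e2 : ‖z0 - t • x‖ ^ 2 = ‖z0‖ ^ 2 - 2 * ⟪z0, t • x⟫ + ‖t • x‖ ^ 2 := by
          rw [norm_sub_sq_real]
        have e3 : ‖t • x - μ • w‖ ^ 2
            = ‖t • x‖ ^ 2 - 2 * ⟪t • x, μ • w⟫ + ‖μ • w‖ ^ 2 := by
          rw [norm_sub_sq_real]
        have e4 : ⟪μ • w, μ • w⟫ = ‖μ • w‖ ^ 2 := real_inner_self_eq_norm_sq _
        have e5 : ⟪μ • w, t • x⟫ = ⟪t • x, μ • w⟫ := real_inner_comm _ _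
        have e6 : (0:ℝ) ≤ ‖t • x - μ • w‖ ^ 2 := sq_nonneg _
        nlinarith [sq_nonneg (t - μ)]
    · intro μ' hμ' hroot'
      set w' := PZ (μ'⁻¹ • z0) with hw'def
      have hw'Z := (hPZ (μ'⁻¹ • z0)).1
      have hA := hμgen μ' hμ'.le w' hw'Z
      have hB := hgen μ' hμ' hroot' μ hμ.le w hwZ
      set u := μ' • w' - μ • w with hu
      have hBu : μ • w - μ' • w' = -u := by rw [hu]; abel
      rw [hBu, inner_neg_right] at hB
      have hdiff : (z0 - μ • w) - (z0 - μ' • w') = u := by rw [hu]; abel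
      have hAB : ⟪z0 - μ • w, u⟫ - ⟪z0 - μ' • w', u⟫ = ‖u‖ ^ 2 := by
        rw [← inner_sub_left, hdiff, real_inner_self_eq_norm_sq]
      have hq : (l0 - μ) * (μ' - μ) + (l0 - μ') * (μ - μ') = (μ' - μ) ^ 2 := by ring
      have hsum : ‖u‖ ^ 2 + (μ' - μ) ^ 2 ≤ 0 := by linarith
      have : (μ' - μ) ^ 2 ≤ 0 := by linarith [sq_nonneg ‖u‖]
      have := le_antisymm this (sq_nonneg _)
      have := pow_eq_zero_iff (two_ne_zero) |>.1 this
      linarith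
  · intro hσle
    constructor
    · rw [hU]
      refine ⟨le_refl 0, ?_⟩
      rw [Set.mem_smul_set]
      exact ⟨0, hZ0, by simp⟩
    · rintro ⟨z, t⟩ hp
      rw [hU] at hp
      obtain ⟨ht, hz⟩ := hp
      rw [Set.mem_smul_set] at hz
      obtain ⟨x, hx, hz⟩ := hz
      dsimp only at ht hz ⊢
      rw [← hz]
      have hix : ⟪z0, x⟫ ≤ σZ := hσZ.1 ⟨x, hx, rfl⟩
      have e2 : ‖z0 - t • x‖ ^ 2 = ‖z0‖ ^ 2 - 2 * (t * ⟪z0, x⟫) + ‖t • x‖ ^ 2 := by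
        rw [norm_sub_sq_real, real_inner_smul_right]
      nlinarith [sq_nonneg ‖t • x‖, mul_le_mul_of_nonneg_left hix ht, sq_nonneg t]
end

section
/- Let Z ⊆ ℝᵈ be convex compact with 0 ∈ Z. For any z̃ ∈ ℝᵈ, the function ψ(μ) = (μ²/2)·dist(z̃/μ, Z)² + (1/2)(λ − μ)² is strictly convex on μ > 0, and its derivative is ψ′(μ) = μ‖P_Z(z̃/μ)‖² − z̃ᵀP_Z(z̃/μ) + μ − λ. -/
open scoped RealInnerProductSpace

set_option maxHeartbeats 1000000

lemma proj_obtuse_aux {d : ℕ} {Z : Set (EuclideanSpace ℝ (Fin d))} (hZconv : Convex ℝ Z)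
    {y p : EuclideanSpace ℝ (Fin d)} (hp : p ∈ Z) (hmin : ∀ x ∈ Z, ‖y - p‖ ≤ ‖y - x‖)
    {x : EuclideanSpace ℝ (Fin d)} (hx : x ∈ Z) : ⟪y - p, x - p⟫ ≤ 0 := by
  haveI : Nonempty Z := ⟨⟨p, hp⟩⟩
  have hinf : ‖y - p‖ = ⨅ w : Z, ‖y - w‖ := by
    apply le_antisymm
    · exact le_ciInf fun w => hmin w w.2
    · have hbdd : BddBelow (Set.range fun w : Z => ‖y - (w : EuclideanSpace ℝ (Fin d))‖) := by
        refine ⟨0, ?_⟩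
        rintro a ⟨w, rfl⟩
        exact norm_nonneg _
      exact ciInf_le hbdd ⟨p, hp⟩
  exact (norm_eq_iInf_iff_real_inner_le_zero hZconv hp).1 hinf x hx

lemma proj_lip_aux {d : ℕ} {Z : Set (EuclideanSpace ℝ (Fin d))} (hZconv : Convex ℝ Z)
    (PZ : EuclideanSpace ℝ (Fin d) → EuclideanSpace ℝ (Fin d))
    (hPZ : ∀ y, PZ y ∈ Z ∧ ∀ x ∈ Z, ‖y - PZ y‖ ≤ ‖y - x‖)
    (y w : EuclideanSpace ℝ (Fin d)) : ‖PZ y - PZ w‖ ≤ ‖y - w‖ := by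
  have e1 : ⟪y - PZ y, PZ w - PZ y⟫ ≤ 0 :=
    proj_obtuse_aux hZconv (hPZ y).1 (hPZ y).2 (hPZ w).1
  have e2 : ⟪w - PZ w, PZ y - PZ w⟫ ≤ 0 :=
    proj_obtuse_aux hZconv (hPZ w).1 (hPZ w).2 (hPZ y).1
  have key : ‖PZ y - PZ w‖ ^ 2 ≤ ⟪y - w, PZ y - PZ w⟫ := by
    have expand : ⟪y - w, PZ y - PZ w⟫
        = ‖PZ y - PZ w‖ ^ 2 + (- ⟪y - PZ y, PZ w - PZ y⟫) + (- ⟪w - PZ w, PZ y - PZ w⟫) := by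
      have : y - w = (y - PZ y) + (PZ y - PZ w) + (PZ w - w) := by abel
      rw [this, inner_add_left, inner_add_left, real_inner_self_eq_norm_sq]
      have h1 : ⟪y - PZ y, PZ y - PZ w⟫ = - ⟪y - PZ y, PZ w - PZ y⟫ := by
        rw [← inner_neg_right]; congr 1; abel
      have h2 : ⟪PZ w - w, PZ y - PZ w⟫ = - ⟪w - PZ w, PZ y - PZ w⟫ := by
        rw [← inner_neg_left]; congr 1; abel
      rw [h1, h2]; ring
    nlinarith [expand]
  have cs : ⟪y - w, PZ y - PZ w⟫ ≤ ‖y - w‖ * ‖PZ y - PZ w‖ := real_inner_le_norm _ _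
  rcases eq_or_lt_of_le (norm_nonneg (PZ y - PZ w)) with h | h
  · rw [← h]; exact norm_nonneg _
  · nlinarith [key, cs]

/-- The function `ψ(μ) = (μ²/2)·dist(z̃/μ, Z)² + (1/2)(λ − μ)²` is strictly convex on
`μ > 0`, with derivative `ψ′(μ) = μ‖P_Z(z̃/μ)‖² − z̃ᵀP_Z(z̃/μ) + μ − λ`. -/
theorem psi_strictConvex_and_deriv (d : ℕ) (Z : Set (EuclideanSpace ℝ (Fin d)))
    (hZconv : Convex ℝ Z) (hZcomp : IsCompact Z) (hZ0 : (0 : EuclideanSpace ℝ (Fin d)) ∈ Z)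
    (PZ : EuclideanSpace ℝ (Fin d) → EuclideanSpace ℝ (Fin d))
    (hPZ : ∀ y, PZ y ∈ Z ∧ ∀ x ∈ Z, ‖y - PZ y‖ ≤ ‖y - x‖)
    (zt : EuclideanSpace ℝ (Fin d)) (lam : ℝ) (ψ : ℝ → ℝ)
    (hψ : ∀ μ, ψ μ = μ ^ 2 / 2 * (Metric.infDist (μ⁻¹ • zt) Z) ^ 2
      + (1 / 2) * (lam - μ) ^ 2) :
    StrictConvexOn ℝ (Set.Ioi (0 : ℝ)) ψ ∧
      ∀ μ : ℝ, 0 < μ → HasDerivAt ψ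
        (μ * ‖PZ (μ⁻¹ • zt)‖ ^ 2 - ⟪zt, PZ (μ⁻¹ • zt)⟫ + μ - lam) μ := by
  -- the projection point as a function of μ
  set z : ℝ → EuclideanSpace ℝ (Fin d) := fun μ => PZ (μ⁻¹ • zt) with hzdef
  -- the "full" objective before minimizing over `Z`
  set Q : EuclideanSpace ℝ (Fin d) → ℝ → ℝ :=
    fun x μ => 1 / 2 * ‖zt - μ • x‖ ^ 2 + 1 / 2 * (lam - μ) ^ 2 with hQdef
  -- scaling identity
  have hscale : ∀ μ : ℝ, 0 < μ → ∀ x : EuclideanSpace ℝ (Fin d),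
      ‖zt - μ • x‖ = μ * ‖μ⁻¹ • zt - x‖ := by
    intro μ hμ x
    have h : zt - μ • x = μ • (μ⁻¹ • zt - x) := by
      rw [smul_sub, smul_inv_smul₀ hμ.ne']
    rw [h, norm_smul, Real.norm_eq_abs, abs_of_pos hμ]
  -- infDist is realized by the projection
  have hdist : ∀ μ : ℝ, Metric.infDist (μ⁻¹ • zt) Z = ‖μ⁻¹ • zt - z μ‖ := by
    intro μ
    apply le_antisymm
    · rw [← dist_eq_norm]
      exact Metric.infDist_le_dist_of_mem (hPZ _).1
    · rw [← not_lt]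
      intro hcon
      obtain ⟨y, hy, hdy⟩ := (Metric.infDist_lt_iff ⟨0, hZ0⟩).1 hcon
      rw [dist_eq_norm] at hdy
      exact absurd ((hPZ _).2 y hy) (by linarith)
  -- value of ψ at the projection
  have hval : ∀ μ : ℝ, 0 < μ → ψ μ = Q (z μ) μ := by
    intro μ hμ
    rw [hψ, hdist μ, hQdef]
    simp only
    rw [hscale μ hμ (z μ)]
    ring
  -- ψ is a lower bound of Q over Z
  have hle : ∀ μ : ℝ, 0 < μ → ∀ x ∈ Z, ψ μ ≤ Q x μ := by
    intro μ hμ x hx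
    rw [hval μ hμ, hQdef]
    simp only
    have h1 : ‖zt - μ • z μ‖ ≤ ‖zt - μ • x‖ := by
      rw [hscale μ hμ, hscale μ hμ]
      exact mul_le_mul_of_nonneg_left ((hPZ _).2 x hx) hμ.le
    have h2 := pow_le_pow_left₀ (norm_nonneg _) h1 2
    linarith
  -- the first summand of ψ
  set f : ℝ → ℝ := fun μ => ψ μ - 1 / 2 * (lam - μ) ^ 2 with hfdef
  have hfval : ∀ μ : ℝ, 0 < μ → f μ = 1 / 2 * ‖zt - μ • z μ‖ ^ 2 := by
    intro μ hμ
    rw [hfdef]; simp only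
    rw [hval μ hμ, hQdef]; ring
  have hfle : ∀ μ : ℝ, 0 < μ → ∀ x ∈ Z, f μ ≤ 1 / 2 * ‖zt - μ • x‖ ^ 2 := by
    intro μ hμ x hx
    have := hle μ hμ x hx
    rw [hQdef] at this
    simp only at this
    rw [hfdef]; simp only
    linarith
  -- f is convex on (0, ∞)
  have hfconv : ConvexOn ℝ (Set.Ioi (0 : ℝ)) f := by
    refine ⟨convex_Ioi 0, ?_⟩
    intro μ₁ h₁ μ₂ h₂ a b ha hb hab
    simp only [Set.mem_Ioi] at h₁ h₂
    simp only [smul_eq_mul]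
    rcases eq_or_lt_of_le ha with rfl | ha'
    · simp only [zero_mul, zero_add]
      have hb1 : b = 1 := by linarith
      simp [hb1]
    rcases eq_or_lt_of_le hb with rfl | hb'
    · simp only [zero_mul, add_zero]
      have ha1 : a = 1 := by linarith
      simp [ha1]
    have hμ : 0 < a * μ₁ + b * μ₂ := by positivity
    set μ := a * μ₁ + b * μ₂ with hμdef
    have hc1 : (0:ℝ) ≤ a * μ₁ / μ := by positivity
    have hc2 : (0:ℝ) ≤ b * μ₂ / μ := by positivity
    have hcs : a * μ₁ / μ + b * μ₂ / μ = 1 := by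
      field_simp
      exact hμdef.symm
    have hζ : (a * μ₁ / μ) • z μ₁ + (b * μ₂ / μ) • z μ₂ ∈ Z :=
      hZconv (hPZ _).1 (hPZ _).1 hc1 hc2 hcs
    have hkey := hfle μ hμ _ hζ
    have hrw : zt - μ • ((a * μ₁ / μ) • z μ₁ + (b * μ₂ / μ) • z μ₂)
        = a • (zt - μ₁ • z μ₁) + b • (zt - μ₂ • z μ₂) := by
      have e1 : μ * (a * μ₁ / μ) = a * μ₁ := by field_simp
      have e2 : μ * (b * μ₂ / μ) = b * μ₂ := by field_simp
      have e3 : a • zt + b • zt = zt := by rw [← add_smul, hab, one_smul]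
      rw [smul_add, smul_smul, smul_smul, e1, e2, smul_sub, smul_sub, smul_smul, smul_smul]
      rw [show a • zt - (a * μ₁) • z μ₁ + (b • zt - (b * μ₂) • z μ₂)
          = (a • zt + b • zt) - ((a * μ₁) • z μ₁ + (b * μ₂) • z μ₂) from by abel, e3]
    rw [hrw] at hkey
    have htr : ‖a • (zt - μ₁ • z μ₁) + b • (zt - μ₂ • z μ₂)‖
        ≤ a * ‖zt - μ₁ • z μ₁‖ + b * ‖zt - μ₂ • z μ₂‖ := by
      refine le_trans (norm_add_le _ _) ?_
      rw [norm_smul, norm_smul, Real.norm_eq_abs, Real.norm_eq_abs,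
        abs_of_pos ha', abs_of_pos hb']
    have hnn : (0:ℝ) ≤ ‖a • (zt - μ₁ • z μ₁) + b • (zt - μ₂ • z μ₂)‖ := norm_nonneg _
    have hsq : ‖a • (zt - μ₁ • z μ₁) + b • (zt - μ₂ • z μ₂)‖ ^ 2
        ≤ (a * ‖zt - μ₁ • z μ₁‖ + b * ‖zt - μ₂ • z μ₂‖) ^ 2 :=
      pow_le_pow_left₀ hnn htr 2
    rw [hfval μ₁ h₁, hfval μ₂ h₂]
    have hconvsq : (a * ‖zt - μ₁ • z μ₁‖ + b * ‖zt - μ₂ • z μ₂‖) ^ 2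
        ≤ a * ‖zt - μ₁ • z μ₁‖ ^ 2 + b * ‖zt - μ₂ • z μ₂‖ ^ 2 := by
      nlinarith [sq_nonneg (‖zt - μ₁ • z μ₁‖ - ‖zt - μ₂ • z μ₂‖), mul_pos ha' hb']
    linarith
  -- the quadratic part is strictly convex
  have hqstrict : StrictConvexOn ℝ (Set.Ioi (0 : ℝ)) (fun μ : ℝ => 1 / 2 * (lam - μ) ^ 2) := by
    refine ⟨convex_Ioi 0, fun x _ y _ hxy a b ha hb hab => ?_⟩
    have h : x - y ≠ 0 := sub_ne_zero.mpr hxy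
    have h2 : 0 < (x - y) ^ 2 := by positivity
    simp only [smul_eq_mul]
    have key : a * (1 / 2 * (lam - x) ^ 2) + b * (1 / 2 * (lam - y) ^ 2)
        - 1 / 2 * (lam - (a * x + b * y)) ^ 2 = a * b / 2 * (x - y) ^ 2 := by
      have hb' : b = 1 - a := by linarith
      rw [hb']; ring
    have hpos : 0 < a * b / 2 * (x - y) ^ 2 := by positivity
    linarith [key, hpos]
  have hpsi_eq : ψ = fun μ => f μ + 1 / 2 * (lam - μ) ^ 2 := by
    funext μ
    rw [hfdef]; simp only; ring
  constructor
  · rw [hpsi_eq]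
    exact hfconv.add_strictConvexOn hqstrict
  -- derivative
  intro μ₀ hμ₀
  set z₀ : EuclideanSpace ℝ (Fin d) := PZ (μ₀⁻¹ • zt) with hz₀def
  set D : ℝ := μ₀ * ‖z₀‖ ^ 2 - ⟪zt, z₀⟫ + μ₀ - lam with hDdef
  set G : ℝ → EuclideanSpace ℝ (Fin d) → ℝ :=
    fun μ x => (μ + μ₀) / 2 * ‖x‖ ^ 2 - ⟪zt, x⟫ + (μ + μ₀) / 2 - lam with hGdef
  have hQdiff : ∀ (x : EuclideanSpace ℝ (Fin d)) (μ : ℝ),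
      Q x μ - Q x μ₀ = (μ - μ₀) * G μ x := by
    intro x μ
    have e : ∀ ν : ℝ, ‖zt - ν • x‖ ^ 2 = ‖zt‖ ^ 2 - 2 * (ν * ⟪zt, x⟫) + ν ^ 2 * ‖x‖ ^ 2 := by
      intro ν
      rw [norm_sub_sq_real, real_inner_smul_right, norm_smul, Real.norm_eq_abs, mul_pow, sq_abs]
    rw [hQdef, hGdef]
    simp only
    rw [e, e]
    ring
  have hGD : G μ₀ z₀ = D := by
    rw [hGdef, hDdef]
    simp only
    ring
  have hzz₀ : z μ₀ = z₀ := rfl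
  -- the key slope bound
  have bound : ∀ μ : ℝ, 0 < μ → μ ≠ μ₀ →
      |slope ψ μ₀ μ - D| ≤ |G μ (z μ) - D| + |G μ z₀ - D| := by
    intro μ hμ hne
    have hub : ψ μ - ψ μ₀ ≤ (μ - μ₀) * G μ z₀ := by
      have h1 : ψ μ ≤ Q z₀ μ := hle μ hμ z₀ (hPZ _).1
      have h2 : ψ μ₀ = Q z₀ μ₀ := by rw [hval μ₀ hμ₀, hzz₀]
      have h3 := hQdiff z₀ μ
      linarith
    have hlb : (μ - μ₀) * G μ (z μ) ≤ ψ μ - ψ μ₀ := by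
      have h1 : ψ μ = Q (z μ) μ := hval μ hμ
      have h2 : ψ μ₀ ≤ Q (z μ) μ₀ := hle μ₀ hμ₀ _ (hPZ _).1
      have h3 := hQdiff (z μ) μ
      linarith
    have hslope : slope ψ μ₀ μ = (ψ μ - ψ μ₀) / (μ - μ₀) := slope_def_field ψ μ₀ μ
    rcases lt_or_gt_of_ne hne with h | h
    · have hd : μ - μ₀ < 0 := by linarith
      have hA : slope ψ μ₀ μ ≤ G μ (z μ) := by
        rw [hslope, div_le_iff_of_neg hd]
        linarith [hlb]
      have hB : G μ z₀ ≤ slope ψ μ₀ μ := by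
        rw [hslope, le_div_iff_of_neg hd]
        linarith [hub]
      refine abs_le.mpr ⟨?_, ?_⟩
      · have := neg_abs_le (G μ z₀ - D)
        have := abs_nonneg (G μ (z μ) - D)
        linarith
      · have := le_abs_self (G μ (z μ) - D)
        have := abs_nonneg (G μ z₀ - D)
        linarith
    · have hd : 0 < μ - μ₀ := by linarith
      have hA : G μ (z μ) ≤ slope ψ μ₀ μ := by
        rw [hslope, le_div_iff₀ hd]
        linarith [hlb]
      have hB : slope ψ μ₀ μ ≤ G μ z₀ := by
        rw [hslope, div_le_iff₀ hd]
        linarith [hub]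
      refine abs_le.mpr ⟨?_, ?_⟩
      · have := neg_abs_le (G μ (z μ) - D)
        have := abs_nonneg (G μ z₀ - D)
        linarith
      · have := le_abs_self (G μ z₀ - D)
        have := abs_nonneg (G μ (z μ) - D)
        linarith
  -- continuity facts
  have hlip : LipschitzWith 1 PZ := by
    apply LipschitzWith.of_dist_le_mul
    intro a b
    rw [dist_eq_norm, dist_eq_norm, NNReal.coe_one, one_mul]
    exact proj_lip_aux hZconv PZ hPZ a b
  have hzc : ContinuousAt z μ₀ := by
    apply ContinuousAt.comp hlip.continuous.continuousAt
    exact (continuousAt_inv₀ hμ₀.ne').smul continuousAt_const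
  have tG1 : Filter.Tendsto (fun μ => G μ (z μ)) (nhdsWithin μ₀ {μ₀}ᶜ) (nhds D) := by
    have hc : ContinuousAt (fun μ => G μ (z μ)) μ₀ := by
      rw [hGdef]
      simp only
      exact ((((continuousAt_id.add continuousAt_const).div_const 2).mul
        ((hzc.norm).pow 2)).sub (continuousAt_const.inner hzc)).add
        ((continuousAt_id.add continuousAt_const).div_const 2) |>.sub continuousAt_const
    have h2 : Filter.Tendsto (fun μ => G μ (z μ)) (nhdsWithin μ₀ {μ₀}ᶜ) (nhds (G μ₀ (z μ₀))) :=
      hc.tendsto.mono_left nhdsWithin_le_nhds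
    rwa [show G μ₀ (z μ₀) = D from by rw [hzz₀]; exact hGD] at h2
  have tG0 : Filter.Tendsto (fun μ => G μ z₀) (nhdsWithin μ₀ {μ₀}ᶜ) (nhds D) := by
    have hc : ContinuousAt (fun μ => G μ z₀) μ₀ := by
      rw [hGdef]
      simp only
      exact ((((continuousAt_id.add continuousAt_const).div_const 2).mul
        continuousAt_const).sub continuousAt_const).add
        ((continuousAt_id.add continuousAt_const).div_const 2) |>.sub continuousAt_const
    have h2 : Filter.Tendsto (fun μ => G μ z₀) (nhdsWithin μ₀ {μ₀}ᶜ) (nhds (G μ₀ z₀)) :=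
      hc.tendsto.mono_left nhdsWithin_le_nhds
    rwa [hGD] at h2
  have hev : ∀ᶠ μ in nhdsWithin μ₀ {μ₀}ᶜ, 0 < μ ∧ μ ≠ μ₀ := by
    filter_upwards [(eventually_gt_nhds hμ₀).filter_mono nhdsWithin_le_nhds,
      eventually_mem_nhdsWithin] with μ h1 h2
    exact ⟨h1, h2⟩
  have habs : Filter.Tendsto (fun μ => |slope ψ μ₀ μ - D|) (nhdsWithin μ₀ {μ₀}ᶜ) (nhds 0) := by
    apply squeeze_zero' (Filter.Eventually.of_forall fun μ => abs_nonneg _)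
    · filter_upwards [hev] with μ hμ
      exact bound μ hμ.1 hμ.2
    · have h1 := (tG1.sub (tendsto_const_nhds (x := D))).abs
      have h2 := (tG0.sub (tendsto_const_nhds (x := D))).abs
      have := h1.add h2
      simpa using this
  rw [hasDerivAt_iff_tendsto_slope]
  rw [tendsto_iff_dist_tendsto_zero]
  simpa [Real.dist_eq] using habs
end

section
/- Let Z ⊆ ℝᵈ be convex compact with 0 ∈ Z. Then for every z̃ ∈ ℝᵈ and every α > 0, α·z̃ᵀP_Z(αz̃) ≥ ‖P_Z(αz̃)‖² ≥ 0, and as α → ∞, any limit point of P_Z(αz̃) belongs to argmax_{p∈Z} z̃ᵀp; in particular lim_{α→∞} z̃ᵀP_Z(αz̃) = σ_Z(z̃). -/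
open scoped RealInnerProductSpace

set_option maxHeartbeats 1000000 in
/-- For a convex compact `Z ∋ 0`: `α·z̃ᵀP_Z(αz̃) ≥ ‖P_Z(αz̃)‖² ≥ 0` for every `α > 0`;
any limit point of `P_Z(αz̃)` as `α → ∞` maximizes `p ↦ z̃ᵀp` over `Z`; and
`z̃ᵀP_Z(αz̃) → σ_Z(z̃)` as `α → ∞`. -/
theorem projection_ray_limits (d : ℕ) (Z : Set (EuclideanSpace ℝ (Fin d)))
    (hZconv : Convex ℝ Z) (hZcomp : IsCompact Z) (hZ0 : (0 : EuclideanSpace ℝ (Fin d)) ∈ Z)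
    (PZ : EuclideanSpace ℝ (Fin d) → EuclideanSpace ℝ (Fin d))
    (hPZ : ∀ y, PZ y ∈ Z ∧ ∀ x ∈ Z, ‖y - PZ y‖ ≤ ‖y - x‖)
    (zt : EuclideanSpace ℝ (Fin d)) :
    (∀ α : ℝ, 0 < α →
      0 ≤ ‖PZ (α • zt)‖ ^ 2 ∧ ‖PZ (α • zt)‖ ^ 2 ≤ α * ⟪zt, PZ (α • zt)⟫) ∧
    (∀ p : EuclideanSpace ℝ (Fin d),
      MapClusterPt p Filter.atTop (fun α : ℝ => PZ (α • zt)) →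
        p ∈ Z ∧ ∀ q ∈ Z, ⟪zt, q⟫ ≤ ⟪zt, p⟫) ∧
    Filter.Tendsto (fun α : ℝ => (⟪zt, PZ (α • zt)⟫ : ℝ)) Filter.atTop
      (nhds (sSup ((fun p => (⟪zt, p⟫ : ℝ)) '' Z))) := by
  -- bound on Z
  obtain ⟨R, hR⟩ := hZcomp.isBounded.exists_norm_le
  have hR0 : 0 ≤ R := le_trans (norm_nonneg _) (hR 0 hZ0)
  -- variational inequality
  have hvar : ∀ y, ∀ x ∈ Z, ⟪y - PZ y, x - PZ y⟫ ≤ 0 := by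
    intro y x hx
    have hmem := (hPZ y).1
    haveI : Nonempty Z := ⟨⟨0, hZ0⟩⟩
    have heq : ‖y - PZ y‖ = ⨅ w : Z, ‖y - w‖ := by
      have hbdd : BddBelow (Set.range fun w : Z => ‖y - (w : EuclideanSpace ℝ (Fin d))‖) := by
        refine ⟨0, ?_⟩
        rintro b ⟨w, rfl⟩
        exact norm_nonneg _
      exact le_antisymm (le_ciInf fun w => (hPZ y).2 w w.2) (ciInf_le hbdd ⟨PZ y, hmem⟩)
    exact (norm_eq_iInf_iff_real_inner_le_zero hZconv hmem).1 heq x hx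
  -- key inequality
  have hkey : ∀ α : ℝ, ∀ q ∈ Z,
      α * ⟪zt, q⟫ ≤ α * ⟪zt, PZ (α • zt)⟫ + ⟪PZ (α • zt), q - PZ (α • zt)⟫ := by
    intro α q hq
    have := hvar (α • zt) q hq
    rw [inner_sub_left, real_inner_smul_left, inner_sub_right] at this
    linarith
  -- part 1
  have part1 : ∀ α : ℝ, 0 < α →
      0 ≤ ‖PZ (α • zt)‖ ^ 2 ∧ ‖PZ (α • zt)‖ ^ 2 ≤ α * ⟪zt, PZ (α • zt)⟫ := by
    intro α hα
    refine ⟨sq_nonneg _, ?_⟩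
    have := hkey α 0 hZ0
    rw [inner_zero_right, zero_sub, inner_neg_right, real_inner_self_eq_norm_sq] at this
    linarith
  -- lower bound for inner product along the ray
  have hlow : ∀ α : ℝ, 0 < α → ∀ q ∈ Z,
      ⟪zt, q⟫ ≤ ⟪zt, PZ (α • zt)⟫ + 2 * R ^ 2 / α := by
    intro α hα q hq
    have h1 := hkey α q hq
    have hb : ⟪PZ (α • zt), q - PZ (α • zt)⟫ ≤ 2 * R ^ 2 := by
      calc ⟪PZ (α • zt), q - PZ (α • zt)⟫ ≤ ‖PZ (α • zt)‖ * ‖q - PZ (α • zt)‖ :=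
            real_inner_le_norm _ _
        _ ≤ R * (R + R) := by
            have h2 : ‖q - PZ (α • zt)‖ ≤ R + R :=
              (norm_sub_le _ _).trans (add_le_add (hR q hq) (hR _ (hPZ _).1))
            exact mul_le_mul (hR _ (hPZ _).1) h2 (norm_nonneg _) hR0
        _ = 2 * R ^ 2 := by ring
    rw [← sub_le_iff_le_add', le_div_iff₀ hα]
    nlinarith
  -- the supremum
  set M := sSup ((fun p => (⟪zt, p⟫ : ℝ)) '' Z) with hM
  have hcont : Continuous fun p : EuclideanSpace ℝ (Fin d) => (⟪zt, p⟫ : ℝ) :=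
    continuous_const.inner continuous_id
  obtain ⟨q0, hq0Z, hq0max⟩ := hZcomp.exists_isMaxOn ⟨0, hZ0⟩ hcont.continuousOn
  have hMq0 : M = ⟪zt, q0⟫ := by
    refine le_antisymm (csSup_le ⟨_, ⟨0, hZ0, rfl⟩⟩ ?_) (le_csSup ?_ ⟨q0, hq0Z, rfl⟩)
    · rintro x ⟨q, hq, rfl⟩; exact hq0max hq
    · exact ⟨⟪zt, q0⟫, by rintro x ⟨q, hq, rfl⟩; exact hq0max hq⟩
  have hub : ∀ α : ℝ, ⟪zt, PZ (α • zt)⟫ ≤ M := by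
    intro α
    rw [hMq0]; exact hq0max (hPZ _).1
  -- part 3
  have part3 : Filter.Tendsto (fun α : ℝ => (⟪zt, PZ (α • zt)⟫ : ℝ)) Filter.atTop (nhds M) := by
    have htl : Filter.Tendsto (fun α : ℝ => M - 2 * R ^ 2 / α) Filter.atTop (nhds M) := by
      have h := (tendsto_const_nhds (x := M) (f := Filter.atTop (α := ℝ))).sub
        ((tendsto_const_nhds (x := 2 * R ^ 2) (f := Filter.atTop (α := ℝ))).div_atTop
          Filter.tendsto_id)
      simpa using h
    refine tendsto_of_tendsto_of_tendsto_of_le_of_le' htl tendsto_const_nhds ?_ ?_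
    · filter_upwards [Filter.eventually_gt_atTop 0] with α hα
      have := hlow α hα q0 hq0Z
      rw [← hMq0] at this; linarith
    · exact Filter.Eventually.of_forall hub
  refine ⟨part1, ?_, part3⟩
  intro p hp
  have hpZ : p ∈ Z := by
    have h1 : ClusterPt p (Filter.map (fun α : ℝ => PZ (α • zt)) Filter.atTop) := hp
    have h2 : Filter.map (fun α : ℝ => PZ (α • zt)) Filter.atTop ≤ Filter.principal Z :=
      Filter.le_principal_iff.2 (Filter.mem_map.2
        (Filter.Eventually.of_forall fun α => (hPZ (α • zt)).1))
    have := mem_closure_iff_clusterPt.2 (h1.mono h2)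
    rwa [hZcomp.isClosed.closure_eq] at this
  refine ⟨hpZ, fun q hq => ?_⟩
  -- ⟪zt, p⟫ is a cluster point of a sequence converging to M, hence equals M
  have hcp : MapClusterPt (⟪zt, p⟫ : ℝ) Filter.atTop
      ((fun x => (⟪zt, x⟫ : ℝ)) ∘ fun α : ℝ => PZ (α • zt)) :=
    hp.continuousAt_comp hcont.continuousAt
  have heq : (⟪zt, p⟫ : ℝ) = M := by
    have h1 : ClusterPt (⟪zt, p⟫ : ℝ)
        (Filter.map ((fun x => (⟪zt, x⟫ : ℝ)) ∘ fun α : ℝ => PZ (α • zt)) Filter.atTop) := hcp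
    have h2 : Filter.map ((fun x => (⟪zt, x⟫ : ℝ)) ∘ fun α : ℝ => PZ (α • zt)) Filter.atTop
        ≤ nhds M := part3
    haveI hne : (nhds (⟪zt, p⟫ : ℝ) ⊓ Filter.map ((fun x => (⟪zt, x⟫ : ℝ)) ∘
        fun α : ℝ => PZ (α • zt)) Filter.atTop).NeBot := h1
    exact eq_of_nhds_neBot (Filter.neBot_of_le (le_inf inf_le_left (le_trans inf_le_right h2)))
  rw [heq, hMq0]
  exact hq0max hq
end

section
/- For the trust-region pessimization problem, letting g(z) = zᵀQz + 2rᵀz + s with Q symmetric positive semidefinite, one has sup over ‖z‖ ≤ 1 of g(z) equal to sup over ‖z‖ ≤ 1 of zᵀ(Q − λ_max(Q)·I)z + 2rᵀz + s + λ_max(Q), and the function z ↦ zᵀ(Q − λ_max(Q)I)z + 2rᵀz + s + λ_max(Q) is concave. -/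
open scoped RealInnerProductSpace

set_option maxHeartbeats 1000000 in
/-- Trust-region reformulation: for `g(z) = zᵀQz + 2rᵀz + s` with `Q` symmetric PSD,
`sup_{‖z‖≤1} g(z) = sup_{‖z‖≤1} zᵀ(Q − λ_max(Q)I)z + 2rᵀz + s + λ_max(Q)`, and the
latter objective is concave. -/
theorem trust_region_concave_reformulation (K : ℕ)
    (T : EuclideanSpace ℝ (Fin K) →L[ℝ] EuclideanSpace ℝ (Fin K))
    (hTsa : IsSelfAdjoint T)
    (hTpsd : ∀ z, 0 ≤ (⟪z, T z⟫ : ℝ))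
    (r : EuclideanSpace ℝ (Fin K)) (s : ℝ)
    -- λ_max is the largest eigenvalue of T
    (lmax : ℝ)
    (hl1 : ∀ z : EuclideanSpace ℝ (Fin K), (⟪z, T z⟫ : ℝ) ≤ lmax * ‖z‖ ^ 2)
    (hl2 : ∃ z : EuclideanSpace ℝ (Fin K), ‖z‖ = 1 ∧ (⟪z, T z⟫ : ℝ) = lmax) :
    sSup ((fun z : EuclideanSpace ℝ (Fin K) => ⟪z, T z⟫ + 2 * ⟪r, z⟫ + s) ''
        {z | ‖z‖ ≤ 1})
      = sSup ((fun z : EuclideanSpace ℝ (Fin K) =>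
          (⟪z, T z⟫ - lmax * ‖z‖ ^ 2) + 2 * ⟪r, z⟫ + s + lmax) '' {z | ‖z‖ ≤ 1}) ∧
    ConcaveOn ℝ Set.univ (fun z : EuclideanSpace ℝ (Fin K) =>
      (⟪z, T z⟫ - lmax * ‖z‖ ^ 2) + 2 * ⟪r, z⟫ + s + lmax) := by
  obtain ⟨u, hu1, hu2⟩ := hl2
  have hsym : ∀ x y : EuclideanSpace ℝ (Fin K), ⟪T x, y⟫ = ⟪x, T y⟫ :=
    fun x y => hTsa.isSymmetric x y
  have hlmax0 : 0 ≤ lmax := hu2 ▸ hTpsd u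
  have hexp : ∀ (a b : ℝ) (x y : EuclideanSpace ℝ (Fin K)),
      (⟪a • x + b • y, T (a • x + b • y)⟫ : ℝ)
        = a ^ 2 * ⟪x, T x⟫ + 2 * (a * b) * ⟪x, T y⟫ + b ^ 2 * ⟪y, T y⟫ := by
    intro a b x y
    have h1 : (⟪y, T x⟫ : ℝ) = ⟪x, T y⟫ := by rw [← hsym x y, real_inner_comm]
    simp only [map_add, map_smul, inner_add_left, inner_add_right,
      real_inner_smul_left, real_inner_smul_right, h1]
    ring
  have hnormexp : ∀ (a b : ℝ) (x y : EuclideanSpace ℝ (Fin K)),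
      ‖a • x + b • y‖ ^ 2 = a ^ 2 * ‖x‖ ^ 2 + 2 * (a * b) * ⟪x, y⟫ + b ^ 2 * ‖y‖ ^ 2 := by
    intro a b x y
    rw [norm_add_sq_real, norm_smul, norm_smul, real_inner_smul_left, real_inner_smul_right]
    simp only [Real.norm_eq_abs, mul_pow, sq_abs]
    ring
  constructor
  · -- the sup equality
    set g : EuclideanSpace ℝ (Fin K) → ℝ := fun z => ⟪z, T z⟫ + 2 * ⟪r, z⟫ + s with hg
    set f : EuclideanSpace ℝ (Fin K) → ℝ :=
      fun z => (⟪z, T z⟫ - lmax * ‖z‖ ^ 2) + 2 * ⟪r, z⟫ + s + lmax with hf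
    have hne : ({z : EuclideanSpace ℝ (Fin K) | ‖z‖ ≤ 1}).Nonempty :=
      ⟨0, by simp⟩
    have hbg : ∀ z ∈ {z : EuclideanSpace ℝ (Fin K) | ‖z‖ ≤ 1},
        g z ≤ lmax + 2 * ‖r‖ + s := by
      intro z hz
      have hz' : ‖z‖ ≤ 1 := hz
      have hz2 : ‖z‖ ^ 2 ≤ 1 := by nlinarith [norm_nonneg z]
      have h1 : (⟪z, T z⟫ : ℝ) ≤ lmax := by
        have h := hl1 z
        have := mul_nonneg hlmax0 (sub_nonneg.mpr hz2)
        nlinarith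
      have h2 : (⟪r, z⟫ : ℝ) ≤ ‖r‖ := by
        have h := real_inner_le_norm r z
        have := mul_nonneg (norm_nonneg r) (sub_nonneg.mpr hz')
        nlinarith
      simp only [hg]; linarith
    have hbA : BddAbove (g '' {z | ‖z‖ ≤ 1}) := by
      refine ⟨lmax + 2 * ‖r‖ + s, ?_⟩
      rintro a ⟨z, hz, rfl⟩; exact hbg z hz
    have hgf : ∀ z ∈ {z : EuclideanSpace ℝ (Fin K) | ‖z‖ ≤ 1}, g z ≤ f z := by
      intro z hz
      have hz' : ‖z‖ ≤ 1 := hz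
      have hz2 : ‖z‖ ^ 2 ≤ 1 := by nlinarith [norm_nonneg z]
      have := mul_nonneg hlmax0 (sub_nonneg.mpr hz2)
      simp only [hg, hf]
      nlinarith
    have hbB : BddAbove (f '' {z | ‖z‖ ≤ 1}) := by
      refine ⟨lmax + 2 * ‖r‖ + s + lmax, ?_⟩
      rintro a ⟨z, hz, rfl⟩
      have hz' : ‖z‖ ≤ 1 := hz
      have h4 := hbg z hz
      have hz2 : ‖z‖ ^ 2 ≤ 1 := by nlinarith [norm_nonneg z]
      have h3 : lmax - lmax * ‖z‖ ^ 2 ≤ lmax := by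
        nlinarith [mul_nonneg hlmax0 (sub_nonneg.mpr hz2)]
      simp only [hf]; simp only [hg] at h4; linarith
    apply le_antisymm
    · apply csSup_le (hne.image g)
      rintro a ⟨z, hz, rfl⟩
      exact le_trans (hgf z hz) (le_csSup hbB ⟨z, hz, rfl⟩)
    · apply csSup_le (hne.image f)
      rintro a ⟨z, hz, rfl⟩
      have hz1 : ‖z‖ ≤ 1 := hz
      obtain ⟨t, hroot, htc⟩ : ∃ t : ℝ, t ^ 2 + 2 * ⟪u, z⟫ * t + ‖z‖ ^ 2 = 1 ∧
          0 ≤ t * (⟪u, T z⟫ - lmax * ⟪u, z⟫ + ⟪r, u⟫) := by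
        set b0 : ℝ := ⟪u, z⟫ with hb0
        set c : ℝ := ⟪u, T z⟫ - lmax * b0 + ⟪r, u⟫ with hc
        have hdisc : 0 ≤ b0 ^ 2 + 1 - ‖z‖ ^ 2 := by nlinarith [norm_nonneg z, sq_nonneg b0]
        set d : ℝ := Real.sqrt (b0 ^ 2 + 1 - ‖z‖ ^ 2) with hd
        have hd0 : 0 ≤ d := Real.sqrt_nonneg _
        have hd2 : d ^ 2 = b0 ^ 2 + 1 - ‖z‖ ^ 2 := Real.sq_sqrt hdisc
        have hdb1 : b0 ≤ d := by nlinarith [norm_nonneg z]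
        have hdb2 : -d ≤ b0 := by nlinarith [norm_nonneg z]
        rcases le_or_gt 0 c with h | h
        · exact ⟨-b0 + d, by nlinarith, mul_nonneg (by linarith) h⟩
        · exact ⟨-b0 - d, by nlinarith, by nlinarith⟩
      set b0 : ℝ := ⟪u, z⟫ with hb0
      have hwnorm : ‖z + t • u‖ ^ 2 = 1 := by
        have hcomm : (⟪z, u⟫ : ℝ) = b0 := (real_inner_comm z u).symm
        rw [norm_add_sq_real, real_inner_smul_right, norm_smul]
        simp only [Real.norm_eq_abs, mul_pow, sq_abs, hu1, hcomm]
        linear_combination hroot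
      have hwle : ‖z + t • u‖ ≤ 1 := by
        nlinarith [norm_nonneg (z + t • u), hwnorm]
      have e1 : (⟪z + t • u, T (z + t • u)⟫ : ℝ)
          = ⟪z, T z⟫ + 2 * t * ⟪u, T z⟫ + t ^ 2 * lmax := by
        have h1 : (⟪z, T u⟫ : ℝ) = ⟪u, T z⟫ := by rw [← hsym u z, real_inner_comm]
        simp only [map_add, map_smul, inner_add_left, inner_add_right,
          real_inner_smul_left, real_inner_smul_right, h1, hu2]
        have h2 : (⟪u, T z⟫ : ℝ) = ⟪T u, z⟫ := (hsym u z).symm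
        ring
      have e2 : (⟪r, z + t • u⟫ : ℝ) = ⟪r, z⟫ + t * ⟪r, u⟫ := by
        rw [inner_add_right, real_inner_smul_right]
      have hfg : f z ≤ g (z + t • u) := by
        simp only [hg, hf, e1, e2]
        have hm : lmax * (t ^ 2 + 2 * b0 * t + ‖z‖ ^ 2) = lmax * 1 := by rw [hroot]
        have htc' : 0 ≤ t * (⟪u, T z⟫ - lmax * b0 + ⟪r, u⟫) := htc
        nlinarith [hm, htc']
      exact le_trans hfg (le_csSup hbA ⟨z + t • u, hwle, rfl⟩)
  · -- concavity
    refine ⟨convex_univ, ?_⟩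
    rintro x - y - a b ha hb hab
    simp only [smul_eq_mul]
    have e1 := hexp a b x y
    have e2 := hnormexp a b x y
    have e3 : (⟪r, a • x + b • y⟫ : ℝ) = a * ⟪r, x⟫ + b * ⟪r, y⟫ := by
      rw [inner_add_right, real_inner_smul_right, real_inner_smul_right]
    have hq : (⟪x - y, T (x - y)⟫ : ℝ) ≤ lmax * ‖x - y‖ ^ 2 := hl1 (x - y)
    have e4 : (⟪x - y, T (x - y)⟫ : ℝ) = ⟪x, T x⟫ - 2 * ⟪x, T y⟫ + ⟪y, T y⟫ := by
      have h := hexp 1 (-1) x y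
      simp only [one_smul, neg_one_smul, ← sub_eq_add_neg] at h
      rw [h]; ring
    have e5 : ‖x - y‖ ^ 2 = ‖x‖ ^ 2 - 2 * ⟪x, y⟫ + ‖y‖ ^ 2 := by
      have h := hnormexp 1 (-1) x y
      simp only [one_smul, neg_one_smul, ← sub_eq_add_neg] at h
      rw [h]; ring
    rw [e4, e5] at hq
    rw [e1, e2, e3]
    have key := mul_nonneg (mul_nonneg ha hb) (sub_nonneg.mpr hq)
    have hb' : b = 1 - a := by linarith
    subst hb'
    nlinarith [key]
end
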